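/- Let x_1,…,x_n and y_1,…,y_m be points in ℝ^d, let k ≤ d, and fix U ∈ S(d,k). Then the infimum over couplings π ∈ Π of ∑_{i,j} π_{ij} ‖UUᵀx_i − y_j‖² equals (infimum over couplings π ∈ Π of ∑_{i,j} π_{ij} ‖UUᵀx_i − UUᵀy_j‖²) + (1/m) ∑_{j=1}^m ‖(I_d − UUᵀ) y_j‖². -/

import Mathlib

open Matrix Finset

/-- The Euclidean (ℓ2) norm of a vector in `ℝ^d`. -/
noncomputable def enorm' {d : ℕ} (v : Fin d → ℝ) : ℝ := Real.sqrt (∑ i, v i ^ 2)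

/-- A coupling between the uniform empirical measures on `n` positives and `m` negatives. -/
def IsCoupling {n m : ℕ} (π : Matrix (Fin n) (Fin m) ℝ) : Prop :=
  (∀ i j, 0 ≤ π i j) ∧ (∀ i, ∑ j, π i j = 1 / (n : ℝ)) ∧ (∀ j, ∑ i, π i j = 1 / (m : ℝ))

lemma enorm_sq {d : ℕ} (v : Fin d → ℝ) : enorm' v ^ 2 = ∑ i, v i ^ 2 :=
  Real.sq_sqrt (Finset.sum_nonneg fun _ _ => sq_nonneg _)

lemma pyth {d : ℕ} (v w : Fin d → ℝ) (h : ∑ i, v i * w i = 0) :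
    enorm' (v - w) ^ 2 = enorm' v ^ 2 + enorm' w ^ 2 := by
  rw [enorm_sq, enorm_sq, enorm_sq]
  have : ∀ i ∈ Finset.univ (α := Fin d), (v - w) i ^ 2 = (v i ^2 + w i ^2) - 2 * (v i * w i) := by
    intro i _; simp [Pi.sub_apply]; ring
  rw [Finset.sum_congr rfl this, Finset.sum_sub_distrib, Finset.sum_add_distrib, ← Finset.mul_sum, h]
  ring

/-- for a fixed `U ∈ S(d,k)`,
`inf_π ∑_{i,j} π_{ij} ‖UUᵀx_i − y_j‖² = (inf_π ∑_{i,j} π_{ij} ‖UUᵀx_i − UUᵀy_j‖²)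
 + (1/m) ∑_j ‖(I_d − UUᵀ) y_j‖²`. -/
theorem stmt9 (d k n m : ℕ) (hkd : k ≤ d) (hn : 0 < n) (hm : 0 < m)
    (x : Fin n → Fin d → ℝ) (y : Fin m → Fin d → ℝ)
    (U : Matrix (Fin d) (Fin k) ℝ) (hU : Uᵀ * U = 1) :
    sInf {t : ℝ | ∃ π : Matrix (Fin n) (Fin m) ℝ, IsCoupling π ∧
        t = ∑ i, ∑ j, π i j * enorm' ((U * Uᵀ).mulVec (x i) - y j) ^ 2} =
      sInf {t : ℝ | ∃ π : Matrix (Fin n) (Fin m) ℝ, IsCoupling π ∧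
          t = ∑ i, ∑ j, π i j *
                enorm' ((U * Uᵀ).mulVec (x i) - (U * Uᵀ).mulVec (y j)) ^ 2} +
        (1 / (m : ℝ)) * ∑ j, enorm' ((1 - U * Uᵀ).mulVec (y j)) ^ 2 := by
  set P : Matrix (Fin d) (Fin d) ℝ := U * Uᵀ with hP
  have hPt : Pᵀ = P := by
    rw [hP, Matrix.transpose_mul, Matrix.transpose_transpose]
  have hPP : P * P = P := by
    rw [hP, Matrix.mul_assoc, ← Matrix.mul_assoc Uᵀ U Uᵀ, hU, Matrix.one_mul]
  -- orthogonality
  have horth : ∀ a b : Fin d → ℝ, ∑ i, (P.mulVec a) i * ((1 - P).mulVec b) i = 0 := by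
    intro a b
    have h0 : Pᵀ * (1 - P) = 0 := by
      rw [hPt, Matrix.mul_sub, Matrix.mul_one, hPP, sub_self]
    have : P.mulVec a ⬝ᵥ (1 - P).mulVec b = a ⬝ᵥ (Pᵀ * (1 - P)).mulVec b := by
      conv_rhs => rw [← Matrix.mulVec_mulVec, Matrix.dotProduct_mulVec, Matrix.vecMul_transpose]
    simpa [dotProduct, h0] using this
  -- pointwise pythagoras
  have hpt : ∀ i j, enorm' (P.mulVec (x i) - y j) ^ 2 =
      enorm' (P.mulVec (x i) - P.mulVec (y j)) ^ 2 + enorm' ((1 - P).mulVec (y j)) ^ 2 := by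
    intro i j
    have hvec : P.mulVec (x i) - y j =
        (P.mulVec (x i) - P.mulVec (y j)) - (1 - P).mulVec (y j) := by
      simp [Matrix.sub_mulVec, Matrix.one_mulVec]
      try abel
    rw [hvec]
    apply pyth
    rw [← Matrix.mulVec_sub]
    exact horth _ _
  set C : ℝ := (1 / (m : ℝ)) * ∑ j, enorm' ((1 - P).mulVec (y j)) ^ 2 with hC
  -- sum identity for couplings
  have hsum : ∀ π : Matrix (Fin n) (Fin m) ℝ, IsCoupling π →
      (∑ i, ∑ j, π i j * enorm' (P.mulVec (x i) - y j) ^ 2) =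
      (∑ i, ∑ j, π i j * enorm' (P.mulVec (x i) - P.mulVec (y j)) ^ 2) + C := by
    intro π hπ
    have : ∑ i, ∑ j, π i j * enorm' (P.mulVec (x i) - y j) ^ 2 =
        (∑ i, ∑ j, π i j * enorm' (P.mulVec (x i) - P.mulVec (y j)) ^ 2) +
        ∑ i, ∑ j, π i j * enorm' ((1 - P).mulVec (y j)) ^ 2 := by
      rw [← Finset.sum_add_distrib]
      apply Finset.sum_congr rfl; intro i _
      rw [← Finset.sum_add_distrib]
      apply Finset.sum_congr rfl; intro j _
      rw [hpt i j]; ring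
    rw [this]
    congr 1
    rw [Finset.sum_comm, hC, Finset.mul_sum]
    apply Finset.sum_congr rfl; intro j _
    rw [← Finset.sum_mul, hπ.2.2 j]
  -- set equality
  set B : Set ℝ := {t : ℝ | ∃ π : Matrix (Fin n) (Fin m) ℝ, IsCoupling π ∧
      t = ∑ i, ∑ j, π i j * enorm' (P.mulVec (x i) - P.mulVec (y j)) ^ 2} with hB
  have hA : {t : ℝ | ∃ π : Matrix (Fin n) (Fin m) ℝ, IsCoupling π ∧
      t = ∑ i, ∑ j, π i j * enorm' (P.mulVec (x i) - y j) ^ 2} = (· + C) '' B := by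
    ext t
    constructor
    · rintro ⟨π, hπ, rfl⟩
      exact ⟨_, ⟨π, hπ, rfl⟩, (hsum π hπ).symm⟩
    · rintro ⟨s, ⟨π, hπ, rfl⟩, rfl⟩
      exact ⟨π, hπ, (hsum π hπ).symm⟩
  have hBne : B.Nonempty := by
    refine ⟨_, fun i j => 1 / (n * m : ℝ), ⟨?_, ?_, ?_⟩, rfl⟩
    · intro i j; positivity
    · intro i
      rw [Finset.sum_const, Finset.card_univ, Fintype.card_fin]
      field_simp
      rw [nsmul_eq_mul, ← mul_assoc, mul_one_div_cancel (mul_ne_zero (Nat.cast_ne_zero.mpr hn.ne') (Nat.cast_ne_zero.mpr hm.ne'))]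
    · intro j
      rw [Finset.sum_const, Finset.card_univ, Fintype.card_fin]
      field_simp
      rw [nsmul_eq_mul, ← mul_assoc, mul_comm (m:ℝ) (n:ℝ), mul_one_div_cancel (mul_ne_zero (Nat.cast_ne_zero.mpr hn.ne') (Nat.cast_ne_zero.mpr hm.ne'))]
  have hBbdd : BddBelow B := by
    refine ⟨0, fun t ht => ?_⟩
    obtain ⟨π, hπ, rfl⟩ := ht
    apply Finset.sum_nonneg; intro i _
    apply Finset.sum_nonneg; intro j _
    exact mul_nonneg (hπ.1 i j) (sq_nonneg _)
  rw [hA, show ((· + C) '' B) = ⇑(OrderIso.addRight C) '' B from rfl,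
    ← (OrderIso.addRight C).map_csInf' hBne hBbdd]
  rfl
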